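/- Let R be a relation on ℤ satisfying the step condition. If b ≤ c and b is chained to c (Relation.ReflTransGen R b c), then for every d with b ≤ d ≤ c, b is chained to d (Relation.ReflTransGen R b d). (Corollary 3.4.1 of the paper: a chain from b up to c passes through every intermediate state.) -/
import Mathlib

/-- Corollary 3.4.1: a chain from b up to c passes through every intermediate state. -/
theorem chained_to_intermediate {R : ℤ → ℤ → Prop}
    (hstep : ∀ b c : ℤ, R b c → |b - c| ≤ 1)
    {b c : ℤ} (hbc : b ≤ c) (hchain : Relation.ReflTransGen R b c) :
    ∀ d : ℤ, b ≤ d → d ≤ c → Relation.ReflTransGen R b d := by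
  clear hbc
  induction hchain with
  | refl =>
    intro d h1 h2
    have : d = b := le_antisymm h2 h1
    subst this; exact Relation.ReflTransGen.refl
  | @tail x y h1 h2 ih =>
    intro d h1d h2d
    rcases le_or_gt d x with h | h
    · exact ih d h1d h
    · have habs := hstep x y h2
      rw [abs_le] at habs
      have : d = y := by omega
      subst this
      exact h1.tail h2
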